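/- (Forbidden zone of a polytope is a union of balls) Let w_1, ..., w_n be points in ℝ^m (n ≥ 1), let P = conv({w_1, ..., w_n}), and let q ∈ P. Then the forbidden zone F(P, q) = {z ∈ ℝ^m : d(z, y) < d(y, q) for some y ∈ P} equals the union of the open balls centered at the w_i with radii d(q, w_i), i.e., F(P, q) = ⋃_{i=1}^n {z ∈ ℝ^m : d(z, w_i) < d(w_i, q)}. -/

import Mathlib

/-- **Forbidden zone of a polytope is a union of balls**. For `P = conv({w 1, …, w n})` and
`q ∈ P`, the forbidden zone `F(P,q) = {z : ∃ y ∈ P, d(z,y) < d(y,q)}` equals the union of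
the open balls centered at the `w i` with radii `d(q, w i)`. -/
theorem forbidden_zone_eq_union_balls {m n : ℕ} (hn : 0 < n)
    (w : Fin n → EuclideanSpace ℝ (Fin m)) (q : EuclideanSpace ℝ (Fin m))
    (hq : q ∈ convexHull ℝ (Set.range w)) :
    {z : EuclideanSpace ℝ (Fin m) |
        ∃ y ∈ convexHull ℝ (Set.range w), dist z y < dist y q} =
      ⋃ i : Fin n, Metric.ball (w i) (dist (w i) q) := by
  ext z
  simp only [Set.mem_setOf_eq, Set.mem_iUnion, Metric.mem_ball]
  constructor
  · rintro ⟨y, hy, hzy⟩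
    by_contra h
    push_neg at h
    set c := (‖z‖ ^ 2 - ‖q‖ ^ 2) / 2 with hc
    have key : ∀ x : EuclideanSpace ℝ (Fin m),
        dist x q ≤ dist z x ↔ (inner ℝ (z - q) x : ℝ) ≤ c := by
      intro x
      rw [← pow_le_pow_iff_left₀ dist_nonneg dist_nonneg (two_ne_zero),
        dist_eq_norm, dist_eq_norm, norm_sub_sq_real, norm_sub_sq_real,
        inner_sub_left]
      constructor <;> intro hineq <;> nlinarith [real_inner_comm x q]
    have hconv : Convex ℝ {x : EuclideanSpace ℝ (Fin m) | (inner ℝ (z - q) x : ℝ) ≤ c} :=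
      convex_halfSpace_le
        ⟨fun a b => inner_add_right _ _ _, fun r a => real_inner_smul_right _ _ _⟩ c
    have hsub : convexHull ℝ (Set.range w) ⊆
        {x : EuclideanSpace ℝ (Fin m) | (inner ℝ (z - q) x : ℝ) ≤ c} := by
      apply convexHull_min _ hconv
      rintro x ⟨i, rfl⟩
      exact (key (w i)).mp (h i)
    have : dist y q ≤ dist z y := (key y).mpr (hsub hy)
    linarith
  · rintro ⟨i, hi⟩
    exact ⟨w i, subset_convexHull ℝ _ ⟨i, rfl⟩, hi⟩
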